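/- Let Γ be a bipartite (simple) graph with at least 4 vertices. The following assertions are equivalent: (1) Γ is a discrete half graph; (2) Γ has no induced subgraph isomorphic to the path P5 on 5 vertices, and Γ is critical. -/

import Mathlib

/-!
Formalization of 2-structures (Ehrenfeucht et al.), modules, primality,
criticality, the outside partition/graph, and (discrete) half graphs.
-/

universe u

variable {V : Type u}

/-- A 2-structure on the vertex type `V`: an equivalence relation on ordered
pairs of (distinct) vertices.  Only its values on off-diagonal pairs matter. -/
structure TwoStructure (V : Type u) where
  rel : V × V → V × V → Prop
  refl : ∀ p : V × V, p.1 ≠ p.2 → rel p p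
  symm : ∀ {p q : V × V}, rel p q → rel q p
  trans : ∀ {p q r : V × V}, rel p q → rel q r → rel p r

namespace TwoStructure

variable (σ : TwoStructure V)

/-- `M` is a module of the induced substructure `σ[W]`. -/
def IsModuleOn (W M : Set V) : Prop :=
  M ⊆ W ∧ ∀ x ∈ M, ∀ y ∈ M, ∀ v ∈ W \ M,
    σ.rel (x, v) (y, v) ∧ σ.rel (v, x) (v, y)

/-- The induced substructure `σ[W]` is prime: it has at least 3 vertices and
all of its modules are trivial. -/
def IsPrimeOn (W : Set V) : Prop :=
  3 ≤ W.encard ∧ ∀ M : Set V, σ.IsModuleOn W M → M = ∅ ∨ M = W ∨ ∃ v, M = {v}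

/-- The induced substructure `σ[W]` is `S`-critical: it is prime and removing
any vertex of `S` destroys primality. -/
def IsCriticalOn (W S : Set V) : Prop :=
  σ.IsPrimeOn W ∧ ∀ v ∈ S, ¬ σ.IsPrimeOn (W \ {v})

/-- `Ext_σ(X)`: the vertices `v ∉ X` with `σ[X ∪ {v}]` prime. -/
def extSet (X : Set V) : Set V := {v | v ∉ X ∧ σ.IsPrimeOn (X ∪ {v})}

/-- `⟨X⟩_σ`: the vertices `v ∉ X` such that `X` is a module of `σ[X ∪ {v}]`. -/
def innSet (X : Set V) : Set V := {v | v ∉ X ∧ σ.IsModuleOn (X ∪ {v}) X}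

/-- `X_σ(α)`: the vertices `v ∉ X` such that `{α, v}` is a module of `σ[X ∪ {v}]`. -/
def attSet (X : Set V) (α : V) : Set V :=
  {v | v ∉ X ∧ σ.IsModuleOn (X ∪ {v}) {α, v}}

/-- The outside partition `p_{(σ, X̄)}`. -/
def pBlocks (X : Set V) : Set (Set V) :=
  {σ.extSet X, σ.innSet X} ∪ (fun α => σ.attSet X α) '' X

/-- `⟨X⟩_σ^{(e,f)}` where the classes `e` and `f` are given by representative
pairs: vertices `v ∈ ⟨X⟩_σ` with `(v,α) ≡_σ e` and `(α,v) ≡_σ f` for all `α ∈ X`. -/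
def innSetC (X : Set V) (e f : V × V) : Set V :=
  {v | v ∈ σ.innSet X ∧ ∀ α ∈ X, σ.rel (v, α) e ∧ σ.rel (α, v) f}

/-- `X_σ^{(e,f)}(α)` where the classes `e` and `f` are given by representative
pairs. -/
def attSetC (X : Set V) (α : V) (e f : V × V) : Set V :=
  {v | v ∈ σ.attSet X α ∧ σ.rel (v, α) e ∧ σ.rel (α, v) f}

/-- The refined outside partition `q_{(σ, X̄)}`. -/
def qBlocks (X : Set V) : Set (Set V) :=
  {σ.extSet X} ∪ {B | ∃ e f : V × V, B = σ.innSetC X e f}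
    ∪ {B | ∃ α ∈ X, ∃ e f : V × V, B = σ.attSetC X α e f}

/-- `q^a`: the blocks of `q_{(σ, X̄)}` other than `Ext_σ(X)` that are not of the
symmetric form `⟨X⟩_σ^{(e,e)}` or `X_σ^{(e,e)}(α)`. -/
def qaBlocks (X : Set V) : Set (Set V) :=
  {B | B ∈ σ.qBlocks X ∧ B ≠ σ.extSet X ∧
    ¬ ∃ e : V × V, B = σ.innSetC X e e ∨ ∃ α ∈ X, B = σ.attSetC X α e e}

/-- The outside graph `Γ_{(σ, X̄)}`: on the vertex set `X̄ = Xᶜ`, two distinct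
vertices `v, w` are adjacent when `σ[X ∪ {v, w}]` is prime.  (Vertices of `X`
are not incident to any edge.) -/
def outsideGraph (X : Set V) : SimpleGraph V where
  Adj v w := v ∉ X ∧ w ∉ X ∧ v ≠ w ∧ σ.IsPrimeOn (X ∪ {v, w})
  symm := ⟨by
    rintro v w ⟨hv, hw, hvw, hp⟩
    refine ⟨hw, hv, hvw.symm, ?_⟩
    rwa [Set.pair_comm w v]⟩
  loopless := ⟨by
    rintro v ⟨-, -, h, -⟩
    exact h rfl⟩

/-- `C` is (the vertex set of) a connected component of the outside graph
`Γ_{(σ, X̄)}` (a component of the graph induced on `X̄`). -/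
def IsComponent (X : Set V) (C : Set V) : Prop :=
  ∃ v, v ∉ X ∧ C = {w | (σ.outsideGraph X).Reachable v w}

end TwoStructure

/-- `M` is a module of the subgraph of `G` induced on `W`. -/
def GraphIsModuleOn (G : SimpleGraph V) (W M : Set V) : Prop :=
  M ⊆ W ∧ ∀ v ∈ W \ M, (∀ x ∈ M, G.Adj v x) ∨ (∀ x ∈ M, ¬ G.Adj v x)

/-- The subgraph of `G` induced on `W` is prime. -/
def GraphIsPrimeOn (G : SimpleGraph V) (W : Set V) : Prop :=
  3 ≤ W.encard ∧ ∀ M : Set V, GraphIsModuleOn G W M → M = ∅ ∨ M = W ∨ ∃ v, M = {v}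

/-- The subgraph of `G` induced on `W` is critical: prime, and removing any of
its vertices destroys primality. -/
def GraphIsCriticalOn (G : SimpleGraph V) (W : Set V) : Prop :=
  GraphIsPrimeOn G W ∧ ∀ v ∈ W, ¬ GraphIsPrimeOn G (W \ {v})

/-- The subgraph of `G` induced on `S` contains an induced path `P₅` on five
vertices. -/
def HasInducedP5On (G : SimpleGraph V) (S : Set V) : Prop :=
  ∃ a b c d e : V, a ∈ S ∧ b ∈ S ∧ c ∈ S ∧ d ∈ S ∧ e ∈ S ∧
    a ≠ b ∧ a ≠ c ∧ a ≠ d ∧ a ≠ e ∧ b ≠ c ∧ b ≠ d ∧ b ≠ e ∧ c ≠ d ∧ c ≠ e ∧ d ≠ e ∧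
    G.Adj a b ∧ G.Adj b c ∧ G.Adj c d ∧ G.Adj d e ∧
    ¬ G.Adj a c ∧ ¬ G.Adj a d ∧ ¬ G.Adj a e ∧ ¬ G.Adj b d ∧ ¬ G.Adj b e ∧ ¬ G.Adj c e

/-- `r` is a linear order on the set `X`. -/
def IsLinearOrderOn (X : Set V) (r : V → V → Prop) : Prop :=
  (∀ x ∈ X, r x x) ∧
  (∀ x ∈ X, ∀ y ∈ X, r x y → r y x → x = y) ∧
  (∀ x ∈ X, ∀ y ∈ X, ∀ z ∈ X, r x y → r y z → r x z) ∧
  (∀ x ∈ X, ∀ y ∈ X, r x y ∨ r y x)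

/-- The linear order `r` on `X` is discrete: every element other than the
minimum has an immediate predecessor, and every element other than the maximum
has an immediate successor. -/
def IsDiscreteOn (X : Set V) (r : V → V → Prop) : Prop :=
  (∀ x ∈ X, ¬ (∀ y ∈ X, r x y) →
    ∃ p ∈ X, p ≠ x ∧ r p x ∧ ∀ z ∈ X, r p z → r z x → z = p ∨ z = x) ∧
  (∀ x ∈ X, ¬ (∀ y ∈ X, r y x) →
    ∃ s ∈ X, s ≠ x ∧ r x s ∧ ∀ z ∈ X, r x z → r z s → z = x ∨ z = s)

/-- `G` is the half graph determined by the bipartition `{X, Y}` of its vertex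
set, the linear order `r` on `X`, and the bijection `φ : X → Y`: the edges of
`G` are exactly the pairs `{x, φ x'}` with `x ≤ x'` in `r`. -/
def IsHalfGraphWith (G : SimpleGraph V) (X Y : Set V) (r : V → V → Prop)
    (φ : V → V) : Prop :=
  Disjoint X Y ∧ X ∪ Y = Set.univ ∧ IsLinearOrderOn X r ∧ Set.BijOn φ X Y ∧
    ∀ u v : V, G.Adj u v ↔ ∃ x ∈ X, ∃ x' ∈ X, r x x' ∧
      ((u = x ∧ v = φ x') ∨ (v = x ∧ u = φ x'))

/-- `G` is a half graph. -/
def IsHalfGraph (G : SimpleGraph V) : Prop :=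
  ∃ (X Y : Set V) (r : V → V → Prop) (φ : V → V), IsHalfGraphWith G X Y r φ

/-- `G` is a discrete half graph: a half graph whose defining linear order is
discrete. -/
def IsDiscreteHalfGraph (G : SimpleGraph V) : Prop :=
  ∃ (X Y : Set V) (r : V → V → Prop) (φ : V → V),
    IsHalfGraphWith G X Y r φ ∧ IsDiscreteOn X r

/-- `G` is bipartite: its vertex set splits into two independent sets. -/
def IsBipartite (G : SimpleGraph V) : Prop :=
  ∃ X Y : Set V, Disjoint X Y ∧ X ∪ Y = Set.univ ∧
    (∀ u ∈ X, ∀ v ∈ X, ¬ G.Adj u v) ∧ (∀ u ∈ Y, ∀ v ∈ Y, ¬ G.Adj u v)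

namespace S8

open Set

variable {V : Type u} {G : SimpleGraph V} {X Y : Set V} {r : V → V → Prop} {φ : V → V}

theorem hgY (hH : IsHalfGraphWith G X Y r φ) {x : V} (hx : x ∈ X) : φ x ∈ Y :=
  hH.2.2.2.1.1 hx

theorem hg_notXY (hH : IsHalfGraphWith G X Y r φ) {x : V} (hx : x ∈ X) : x ∉ Y :=
  Set.disjoint_left.1 hH.1 hx

theorem hg_adjXY (hH : IsHalfGraphWith G X Y r φ) {x x' : V} (hx : x ∈ X) (hx' : x' ∈ X) :
    G.Adj x (φ x') ↔ r x x' := by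
  constructor
  · intro h
    rw [hH.2.2.2.2] at h
    obtain ⟨a, ha, a', ha', hr, ⟨h1, h2⟩ | ⟨h1, h2⟩⟩ := h
    · have : x' = a' := hH.2.2.2.1.2.1 hx' ha' h2
      subst h1; rwa [this]
    · exact absurd (h1 ▸ hgY hH hx') (hg_notXY hH ha)
  · intro h
    rw [hH.2.2.2.2]
    exact ⟨x, hx, x', hx', h, Or.inl ⟨rfl, rfl⟩⟩

theorem hg_side (hH : IsHalfGraphWith G X Y r φ) {u v : V} (h : G.Adj u v) :
    (u ∈ X ∧ v ∈ Y) ∨ (u ∈ Y ∧ v ∈ X) := by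
  rw [hH.2.2.2.2] at h
  obtain ⟨a, ha, a', ha', hr, ⟨h1, h2⟩ | ⟨h1, h2⟩⟩ := h
  · exact Or.inl ⟨h1 ▸ ha, h2 ▸ hgY hH ha'⟩
  · exact Or.inr ⟨h2 ▸ hgY hH ha', h1 ▸ ha⟩

theorem hg_notXX (hH : IsHalfGraphWith G X Y r φ) {u v : V} (hu : u ∈ X) (hv : v ∈ X) :
    ¬ G.Adj u v := by
  intro h
  rcases hg_side hH h with ⟨-, h2⟩ | ⟨h2, -⟩
  · exact hg_notXY hH hv h2
  · exact hg_notXY hH hu h2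

theorem hg_notYY (hH : IsHalfGraphWith G X Y r φ) {u v : V} (hu : u ∈ Y) (hv : v ∈ Y) :
    ¬ G.Adj u v := by
  intro h
  rcases hg_side hH h with ⟨h2, -⟩ | ⟨-, h2⟩
  · exact hg_notXY hH h2 hu
  · exact hg_notXY hH h2 hv

theorem hg_surj (hH : IsHalfGraphWith G X Y r φ) {y : V} (hy : y ∈ Y) :
    ∃ x ∈ X, φ x = y := hH.2.2.2.1.2.2 hy

theorem hg_sideXY (hH : IsHalfGraphWith G X Y r φ) (v : V) : v ∈ X ∨ v ∈ Y := by
  have : v ∈ X ∪ Y := hH.2.1 ▸ Set.mem_univ v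
  exact this

-- linear order accessors
theorem hg_refl (hH : IsHalfGraphWith G X Y r φ) {x : V} (hx : x ∈ X) : r x x :=
  hH.2.2.1.1 x hx

theorem hg_antisymm (hH : IsHalfGraphWith G X Y r φ) {x y : V} (hx : x ∈ X) (hy : y ∈ X)
    (h1 : r x y) (h2 : r y x) : x = y := hH.2.2.1.2.1 x hx y hy h1 h2

theorem hg_trans (hH : IsHalfGraphWith G X Y r φ) {x y z : V} (hx : x ∈ X) (hy : y ∈ X)
    (hz : z ∈ X) (h1 : r x y) (h2 : r y z) : r x z := hH.2.2.1.2.2.1 x hx y hy z hz h1 h2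

theorem hg_total (hH : IsHalfGraphWith G X Y r φ) {x y : V} (hx : x ∈ X) (hy : y ∈ X) :
    r x y ∨ r y x := hH.2.2.1.2.2.2 x hx y hy

theorem hg_p5free (hH : IsHalfGraphWith G X Y r φ) : ¬ HasInducedP5On G Set.univ := by
  rintro ⟨a, b, c, d, e, -, -, -, -, -, -, -, -, -, -, -, -, -, -, -,
    hab, hbc, hcd, hde, -, had, -, -, hbe, -⟩
  rcases hg_side hH hab with ⟨haX, hbY⟩ | ⟨haY, hbX⟩
  · -- a, c, e ∈ X; b, d ∈ Y
    have hcX : c ∈ X := by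
      rcases hg_side hH hbc with ⟨h1, -⟩ | ⟨-, h2⟩
      · exact absurd h1 (fun h => hg_notXY hH h hbY)
      · exact h2
    have hdY : d ∈ Y := by
      rcases hg_side hH hcd with ⟨-, h2⟩ | ⟨h1, -⟩
      · exact h2
      · exact absurd hcX (fun h => hg_notXY hH h h1)
    have heX : e ∈ X := by
      rcases hg_side hH hde with ⟨h1, -⟩ | ⟨-, h2⟩
      · exact absurd h1 (fun h => hg_notXY hH h hdY)
      · exact h2
    obtain ⟨b0, hb0, rfl⟩ := hg_surj hH hbY
    obtain ⟨d0, hd0, rfl⟩ := hg_surj hH hdY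
    have h1 : r a b0 := (hg_adjXY hH haX hb0).1 hab
    have h2 : r c d0 := (hg_adjXY hH hcX hd0).1 hcd
    have h3 : r e d0 := (hg_adjXY hH heX hd0).1 hde.symm
    have h4 : ¬ r a d0 := fun h => had ((hg_adjXY hH haX hd0).2 h)
    have h5 : ¬ r e b0 := fun h => hbe ((hg_adjXY hH heX hb0).2 h).symm
    rcases hg_total hH hb0 hd0 with h | h
    · exact h4 (hg_trans hH haX hb0 hd0 h1 h)
    · exact h5 (hg_trans hH heX hd0 hb0 h3 h)
  · -- b, d ∈ X; a, c, e ∈ Y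
    have hcY : c ∈ Y := by
      rcases hg_side hH hbc with ⟨-, h2⟩ | ⟨h1, -⟩
      · exact h2
      · exact absurd hbX (fun h => hg_notXY hH h h1)
    have hdX : d ∈ X := by
      rcases hg_side hH hcd with ⟨h1, -⟩ | ⟨-, h2⟩
      · exact absurd h1 (fun h => hg_notXY hH h hcY)
      · exact h2
    have heY : e ∈ Y := by
      rcases hg_side hH hde with ⟨-, h2⟩ | ⟨h1, -⟩
      · exact h2
      · exact absurd hdX (fun h => hg_notXY hH h h1)
    obtain ⟨a0, ha0, rfl⟩ := hg_surj hH haY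
    obtain ⟨c0, hc0, rfl⟩ := hg_surj hH hcY
    obtain ⟨e0, he0, rfl⟩ := hg_surj hH heY
    have h1 : r b a0 := (hg_adjXY hH hbX ha0).1 hab.symm
    have h3 : r d e0 := (hg_adjXY hH hdX he0).1 hde
    have h4 : ¬ r d a0 := fun h => had ((hg_adjXY hH hdX ha0).2 h).symm
    have h5 : ¬ r b e0 := fun h => hbe ((hg_adjXY hH hbX he0).2 h)
    rcases hg_total hH ha0 he0 with h | h
    · exact h5 (hg_trans hH hbX ha0 he0 h1 h)
    · exact h4 (hg_trans hH hdX he0 ha0 h3 h)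

theorem hg_ML (hH : IsHalfGraphWith G X Y r φ) {M : Set V}
    (hM : GraphIsModuleOn G Set.univ M) {x x' : V} (hx : x ∈ X) (hx' : x' ∈ X)
    (hxM : x ∈ M) (hx'M : φ x' ∈ M) (hr : r x x') : M = Set.univ := by
  ext w
  simp only [Set.mem_univ, iff_true]
  by_contra hw
  have hw' := hM.2 w ⟨Set.mem_univ w, hw⟩
  rcases hg_sideXY hH w with hwX | hwY
  · have hnone : ∀ m ∈ M, ¬ G.Adj w m := by
      rcases hw' with hall | hnone
      · exact absurd (hall x hxM) (hg_notXX hH hwX hx)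
      · exact hnone
    have hrx'w : r x' w := by
      rcases hg_total hH hwX hx' with h1 | h2
      · exact absurd ((hg_adjXY hH hwX hx').2 h1) (hnone _ hx'M)
      · exact h2
    have hrxw : r x w := hg_trans hH hx hx' hwX hr hrx'w
    have hφwM : φ w ∈ M := by
      by_contra hφw
      rcases hM.2 (φ w) ⟨Set.mem_univ _, hφw⟩ with hall | hnone'
      · exact hg_notYY hH (hgY hH hwX) (hgY hH hx') (hall _ hx'M)
      · exact hnone' x hxM (((hg_adjXY hH hx hwX).2 hrxw).symm)
    exact hnone _ hφwM ((hg_adjXY hH hwX hwX).2 (hg_refl hH hwX))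
  · obtain ⟨z, hz, rfl⟩ := hg_surj hH hwY
    have hnone : ∀ m ∈ M, ¬ G.Adj (φ z) m := by
      rcases hw' with hall | hnone
      · exact absurd (hall _ hx'M) (hg_notYY hH (hgY hH hz) (hgY hH hx'))
      · exact hnone
    have hrzx : r z x := by
      rcases hg_total hH hz hx with h1 | h2
      · exact h1
      · exact absurd ((hg_adjXY hH hx hz).2 h2).symm (hnone x hxM)
    have hzM : z ∈ M := by
      by_contra hzM
      rcases hM.2 z ⟨Set.mem_univ _, hzM⟩ with hall | hnone'
      · exact hg_notXX hH hz hx (hall x hxM)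
      · exact hnone' _ hx'M ((hg_adjXY hH hz hx').2 (hg_trans hH hz hx hx' hrzx hr))
    exact hnone z hzM (((hg_adjXY hH hz hz).2 (hg_refl hH hz)).symm)

theorem hg_prime (hH : IsHalfGraphWith G X Y r φ)
    (hcard : 4 ≤ (Set.univ : Set V).encard) : GraphIsPrimeOn G Set.univ := by
  refine ⟨le_trans (by norm_num) hcard, ?_⟩
  intro M hM
  by_contra hcon
  push_neg at hcon
  obtain ⟨hne, hnuniv, hnsing⟩ := hcon
  obtain ⟨a, ha⟩ := hne
  have hb : ∃ b ∈ M, b ≠ a := by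
    by_contra hb
    push_neg at hb
    exact hnsing a (Set.eq_singleton_iff_unique_mem.2 ⟨ha, hb⟩)
  obtain ⟨b, hb, hba⟩ := hb
  -- key: from x ∈ M ∩ X with φ x' ∈ M, r x x', conclude
  -- key1: p q ∈ X ∩ M distinct, r p q ⇒ M = univ
  have key1 : ∀ p q, p ∈ X → q ∈ X → p ∈ M → q ∈ M → p ≠ q → r p q → M = Set.univ := by
    intro p q hpX hqX hpM hqM hpq hrpq
    have hφpM : φ p ∈ M := by
      by_contra hφp
      rcases hM.2 (φ p) ⟨Set.mem_univ _, hφp⟩ with hall | hnone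
      · have := (hall q hqM).symm
        rw [hg_adjXY hH hqX hpX] at this
        exact hpq (hg_antisymm hH hpX hqX hrpq this)
      · exact hnone p hpM (((hg_adjXY hH hpX hpX).2 (hg_refl hH hpX)).symm)
    exact hg_ML hH hM hpX hpX hpM hφpM (hg_refl hH hpX)
  -- key2: φ p, φ q ∈ M, p q ∈ X distinct, r p q ⇒ M = univ
  have key2 : ∀ p q, p ∈ X → q ∈ X → φ p ∈ M → φ q ∈ M → p ≠ q → r p q → M = Set.univ := by
    intro p q hpX hqX hpM hqM hpq hrpq
    have hqM' : q ∈ M := by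
      by_contra hq
      rcases hM.2 q ⟨Set.mem_univ _, hq⟩ with hall | hnone
      · have := hall _ hpM
        rw [hg_adjXY hH hqX hpX] at this
        exact hpq (hg_antisymm hH hpX hqX hrpq this)
      · exact hnone _ hqM ((hg_adjXY hH hqX hqX).2 (hg_refl hH hqX))
    exact hg_ML hH hM hqX hqX hqM' hqM (hg_refl hH hqX)
  -- keymix: p ∈ M ∩ X, φ q ∈ M ⇒ M = univ
  have keymix : ∀ p q, p ∈ X → q ∈ X → p ∈ M → φ q ∈ M → M = Set.univ := by
    intro p q hpX hqX hpM hqM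
    rcases hg_total hH hpX hqX with h | h
    · exact hg_ML hH hM hpX hqX hpM hqM h
    · by_cases hpq : q = p
      · exact hg_ML hH hM hpX hqX hpM hqM (hpq ▸ hg_refl hH hqX)
      · have hqM' : q ∈ M := by
          by_contra hq
          rcases hM.2 q ⟨Set.mem_univ _, hq⟩ with hall | hnone
          · exact hg_notXX hH hqX hpX (hall p hpM)
          · exact hnone _ hqM ((hg_adjXY hH hqX hqX).2 (hg_refl hH hqX))
        exact hg_ML hH hM hqX hqX hqM' hqM (hg_refl hH hqX)
  have huniv : M = Set.univ := by
    rcases hg_sideXY hH a with haX | haY <;> rcases hg_sideXY hH b with hbX | hbY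
    · rcases hg_total hH hbX haX with h | h
      · exact key1 b a hbX haX hb ha hba h
      · exact key1 a b haX hbX ha hb (Ne.symm hba) h
    · obtain ⟨b0, hb0, rfl⟩ := hg_surj hH hbY
      exact keymix a b0 haX hb0 ha hb
    · obtain ⟨a0, ha0, rfl⟩ := hg_surj hH haY
      exact keymix b a0 hbX ha0 hb ha
    · obtain ⟨a0, ha0, rfl⟩ := hg_surj hH haY
      obtain ⟨b0, hb0, rfl⟩ := hg_surj hH hbY
      have hab0 : a0 ≠ b0 := fun h => hba (by rw [h])
      rcases hg_total hH ha0 hb0 with h | h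
      · exact key2 a0 b0 ha0 hb0 ha hb hab0 h
      · exact key2 b0 a0 hb0 ha0 hb ha (Ne.symm hab0) h
  exact hnuniv huniv

theorem encard_ge2 {W : Set V} {w : V} (h3 : 3 ≤ W.encard) (hw : w ∈ W) :
    2 ≤ (W \ {w}).encard := by
  rw [Set.encard_diff_singleton_of_mem hw]
  exact ENat.le_sub_of_add_le_left (by norm_num) (by norm_num; exact h3)

theorem nontriv_of_ge2 {M : Set V} (h2 : 2 ≤ M.encard) :
    M ≠ ∅ ∧ ∀ w, M ≠ {w} := by
  constructor
  · intro h; rw [h, Set.encard_empty] at h2; norm_num at h2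
  · intro w h; rw [h, Set.encard_singleton] at h2; norm_num at h2

theorem hg_notprime_pair (hH : IsHalfGraphWith G X Y r φ) {W : Set V} {a b : V}
    (hprime : GraphIsPrimeOn G W) (hab : a ≠ b) (haW : a ∈ W) (hbW : b ∈ W)
    (hmod : GraphIsModuleOn G W {a, b}) : False := by
  rcases hprime.2 _ hmod with h | h | ⟨v, h⟩
  · have : a ∈ ({a, b} : Set V) := by simp
    rw [h] at this
    exact this
  · have h2 : ({a, b} : Set V).encard = 2 := Set.encard_pair hab
    rw [h] at h2
    have h3 := hprime.1
    rw [h2] at h3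
    norm_num at h3
  · have ha : a = v := by have := h ▸ (Set.mem_insert a {b}); simpa using this
    have hb : b = v := by
      have : b ∈ ({a, b} : Set V) := by simp
      rw [h] at this; simpa using this
    exact hab (ha.trans hb.symm)

theorem hg_critical (hH : IsHalfGraphWith G X Y r φ) (hdisc : IsDiscreteOn X r)
    (hcard : 4 ≤ (Set.univ : Set V).encard) : GraphIsCriticalOn G Set.univ := by
  refine ⟨hg_prime hH hcard, ?_⟩
  intro v _ hprime
  set W : Set V := Set.univ \ {v} with hW
  have hmemW : ∀ u : V, u ≠ v → u ∈ W := fun u hu => ⟨Set.mem_univ u, hu⟩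
  have hW3 : 3 ≤ W.encard := hprime.1
  rcases hg_sideXY hH v with hvX | hvY
  · by_cases hmin : ∀ y ∈ X, r v y
    · -- v is the minimum: W \ {φ v} is a module
      have hφvW : φ v ∈ W := hmemW _ (fun h => hg_notXY hH hvX (h ▸ hgY hH hvX))
      set M : Set V := W \ {φ v} with hM
      have hmod : GraphIsModuleOn G W M := by
        refine ⟨Set.diff_subset, ?_⟩
        intro u hu
        have huv : u = φ v := by
          rcases hu with ⟨huW, huM⟩
          by_contra h
          exact huM ⟨huW, h⟩
        subst huv
        right
        intro m hm
        obtain ⟨⟨-, hmv⟩, hmφv⟩ := hm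
        intro hadj
        rcases hg_sideXY hH m with hmX | hmY
        · have := (hg_adjXY hH hmX hvX).1 hadj.symm
          have : m = v := hg_antisymm hH hmX hvX this (hmin m hmX)
          exact hmv (by simpa using this)
        · exact hg_notYY hH (hgY hH hvX) hmY hadj
      rcases hprime.2 M hmod with h | h | ⟨w, h⟩
      · have := (nontriv_of_ge2 (encard_ge2 hW3 hφvW)).1; exact this h
      · have : φ v ∈ M := h ▸ hφvW
        exact this.2 rfl
      · exact (nontriv_of_ge2 (encard_ge2 hW3 hφvW)).2 w h
    · -- v has a predecessor p; {φ p, φ v} is a module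
      push_neg at hmin
      obtain ⟨p, hpX, hpv, hrpv, hbet⟩ := hdisc.1 v hvX (by push_neg; exact hmin)
      have hφp : φ p ∈ W := hmemW _ (fun h => hg_notXY hH hvX (h ▸ hgY hH hpX))
      have hφv : φ v ∈ W := hmemW _ (fun h => hg_notXY hH hvX (h ▸ hgY hH hvX))
      have hφpv : φ p ≠ φ v := fun h => hpv (hH.2.2.2.1.2.1 hpX hvX h)
      have hmod : GraphIsModuleOn G W {φ p, φ v} := by
        refine ⟨by intro u hu; rcases hu with h | h; exacts [h ▸ hφp, h ▸ hφv], ?_⟩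
        rintro u ⟨⟨-, huv⟩, huM⟩
        rcases hg_sideXY hH u with huX | huY
        · have hiff : r u p ↔ r u v := by
            constructor
            · intro h; exact hg_trans hH huX hpX hvX h hrpv
            · intro h
              rcases hg_total hH huX hpX with h1 | h1
              · exact h1
              · rcases hbet u huX h1 h with h2 | h2
                · rw [h2]; exact hg_refl hH hpX
                · exact absurd (by simpa using h2) huv
          by_cases hadj : r u p
          · left
            intro m hm
            rcases hm with h | h
            · exact h ▸ (hg_adjXY hH huX hpX).2 hadj
            · exact h ▸ (hg_adjXY hH huX hvX).2 (hiff.1 hadj)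
          · right
            intro m hm hA
            rcases hm with h | h
            · exact hadj ((hg_adjXY hH huX hpX).1 (h ▸ hA))
            · exact hadj (hiff.2 ((hg_adjXY hH huX hvX).1 (h ▸ hA)))
        · right
          intro m hm hA
          rcases hm with h | h
          · exact hg_notYY hH huY (hgY hH hpX) (h ▸ hA)
          · exact hg_notYY hH huY (hgY hH hvX) (h ▸ hA)
      exact hg_notprime_pair hH hprime hφpv hφp hφv hmod
  · obtain ⟨x0, hx0X, rfl⟩ := hg_surj hH hvY
    have hx0W : x0 ∈ W := hmemW _ (fun h => hg_notXY hH hx0X (h ▸ hgY hH hx0X))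
    by_cases hmax : ∀ y ∈ X, r y x0
    · -- x0 is the maximum: W \ {x0} is a module
      set M : Set V := W \ {x0} with hM
      have hmod : GraphIsModuleOn G W M := by
        refine ⟨Set.diff_subset, ?_⟩
        intro u hu
        have huv : u = x0 := by
          rcases hu with ⟨huW, huM⟩
          by_contra h
          exact huM ⟨huW, h⟩
        rw [huv]
        right
        intro m hm
        obtain ⟨⟨-, hmv⟩, hmx0⟩ := hm
        intro hadj
        rcases hg_sideXY hH m with hmX | hmY
        · exact hg_notXX hH hx0X hmX hadj
        · obtain ⟨z, hzX, rfl⟩ := hg_surj hH hmY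
          have h1 := (hg_adjXY hH hx0X hzX).1 hadj
          have : z = x0 := hg_antisymm hH hzX hx0X (hmax z hzX) h1
          exact hmv (by rw [this]; rfl)
      rcases hprime.2 M hmod with h | h | ⟨w, h⟩
      · exact (nontriv_of_ge2 (encard_ge2 hW3 hx0W)).1 h
      · have : x0 ∈ M := h ▸ hx0W
        exact this.2 rfl
      · exact (nontriv_of_ge2 (encard_ge2 hW3 hx0W)).2 w h
    · -- x0 has a successor s; {x0, s} is a module
      push_neg at hmax
      obtain ⟨s, hsX, hsx0, hrx0s, hbet⟩ := hdisc.2 x0 hx0X (by push_neg; exact hmax)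
      have hx0 : x0 ∈ W := hx0W
      have hsW : s ∈ W := hmemW _ (fun h => hg_notXY hH hsX (h ▸ hgY hH hx0X))
      have hx0s : x0 ≠ s := fun h => hsx0 h.symm
      have hmod : GraphIsModuleOn G W {x0, s} := by
        refine ⟨by intro u hu; rcases hu with h | h; exacts [h ▸ hx0, h ▸ hsW], ?_⟩
        rintro u ⟨⟨-, huv⟩, huM⟩
        rcases hg_sideXY hH u with huX | huY
        · right
          intro m hm hA
          rcases hm with h | h
          · exact hg_notXX hH huX hx0X (h ▸ hA)
          · exact hg_notXX hH huX hsX (h ▸ hA)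
        · obtain ⟨z, hzX, rfl⟩ := hg_surj hH huY
          have hzx0 : z ≠ x0 := fun h => huv (by rw [h]; rfl)
          have hiff : r x0 z ↔ r s z := by
            constructor
            · intro h
              rcases hg_total hH hsX hzX with h1 | h1
              · exact h1
              · rcases hbet z hzX h h1 with h2 | h2
                · exact absurd h2 hzx0
                · rw [h2]; exact hg_refl hH hsX
            · intro h; exact hg_trans hH hx0X hsX hzX hrx0s h
          by_cases hadj : r x0 z
          · left
            intro m hm
            rcases hm with h | h
            · exact h ▸ ((hg_adjXY hH hx0X hzX).2 hadj).symm
            · exact h ▸ ((hg_adjXY hH hsX hzX).2 (hiff.1 hadj)).symm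
          · right
            intro m hm hA
            rcases hm with h | h
            · exact hadj ((hg_adjXY hH hx0X hzX).1 (h ▸ hA).symm)
            · exact hadj (hiff.2 ((hg_adjXY hH hsX hzX).1 (h ▸ hA).symm))
      exact hg_notprime_pair hH hprime hx0s hx0 hsW hmod

-- ### Backward direction ###

theorem bp_side {G : SimpleGraph V} {X Y : Set V} (hu : X ∪ Y = Set.univ)
    (hX : ∀ u ∈ X, ∀ v ∈ X, ¬ G.Adj u v) {x v : V} (hx : x ∈ X) (h : G.Adj x v) : v ∈ Y := by
  have hv : v ∈ X ∪ Y := hu ▸ Set.mem_univ v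
  rcases hv with hv | hv
  · exact absurd h (hX x hx v hv)
  · exact hv

theorem no_twins {G : SimpleGraph V} (hpr : GraphIsPrimeOn G Set.univ)
    (hcard : 4 ≤ (Set.univ : Set V).encard) {a b : V} (hab : a ≠ b)
    (h : G.neighborSet a = G.neighborSet b) : False := by
  have hmod : GraphIsModuleOn G Set.univ {a, b} := by
    refine ⟨Set.subset_univ _, ?_⟩
    rintro v ⟨-, hv⟩
    have hiff : G.Adj v a ↔ G.Adj v b := by
      constructor
      · intro hA
        have h2 : v ∈ G.neighborSet a := hA.symm
        rw [h] at h2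
        exact h2.symm
      · intro hA
        have h2 : v ∈ G.neighborSet b := hA.symm
        rw [← h] at h2
        exact h2.symm
    by_cases hadj : G.Adj v a
    · left
      intro m hm
      rcases hm with h1 | h1
      · rw [h1]; exact hadj
      · rw [h1]; exact hiff.1 hadj
    · right
      intro m hm hA
      rcases hm with h1 | h1
      · rw [h1] at hA; exact hadj hA
      · rw [h1] at hA; exact hadj (hiff.2 hA)
  rcases hpr.2 _ hmod with h' | h' | ⟨w, h'⟩
  · have : a ∈ ({a, b} : Set V) := by simp
    rw [h'] at this
    exact this
  · have h2 : ({a, b} : Set V).encard = 2 := Set.encard_pair hab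
    rw [h'] at h2
    rw [h2] at hcard
    norm_num at hcard
  · have h1 : a ∈ ({a, b} : Set V) := by simp
    have h2 : b ∈ ({a, b} : Set V) := by simp
    rw [h'] at h1 h2
    exact hab (h1.trans h2.symm)

theorem no_isolated {G : SimpleGraph V} (hpr : GraphIsPrimeOn G Set.univ)
    (hcard : 4 ≤ (Set.univ : Set V).encard) {v : V} (h : ∀ w, ¬ G.Adj v w) : False := by
  have h3 : 3 ≤ (Set.univ \ {v} : Set V).encard := by
    rw [Set.encard_diff_singleton_of_mem (Set.mem_univ v)]
    exact ENat.le_sub_of_add_le_left (by norm_num) (by norm_num at hcard ⊢; exact hcard)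
  have hmod : GraphIsModuleOn G Set.univ (Set.univ \ {v}) := by
    refine ⟨Set.subset_univ _, ?_⟩
    rintro u ⟨-, hu⟩
    have : u = v := by
      by_contra h'
      exact hu ⟨Set.mem_univ u, h'⟩
    subst this
    right
    exact fun m _ => h m
  rcases hpr.2 _ hmod with h' | h' | ⟨w, h'⟩
  · rw [h', Set.encard_empty] at h3; norm_num at h3
  · have : v ∈ Set.univ \ {v} := by rw [h']; exact Set.mem_univ v
    exact this.2 rfl
  · rw [h', Set.encard_singleton] at h3; norm_num at h3

theorem gconnected {G : SimpleGraph V} (hpr : GraphIsPrimeOn G Set.univ)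
    (hcard : 4 ≤ (Set.univ : Set V).encard) (a b : V) : G.Reachable a b := by
  have hmod : GraphIsModuleOn G Set.univ {w | G.Reachable a w} := by
    refine ⟨Set.subset_univ _, ?_⟩
    rintro u ⟨-, hu⟩
    right
    intro m hm hA
    exact hu (hm.trans hA.symm.reachable)
  have hra : G.Reachable a a := ⟨SimpleGraph.Walk.nil⟩
  rcases hpr.2 _ hmod with h' | h' | ⟨w, h'⟩
  · exfalso
    have : a ∈ (∅ : Set V) := by rw [← h']; exact hra
    exact this
  · have : b ∈ {w | G.Reachable a w} := by rw [h']; exact Set.mem_univ b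
    exact this
  · exfalso
    have haw : a ∈ ({w} : Set V) := by rw [← h']; exact hra
    refine no_isolated hpr hcard (v := a) ?_
    intro u hA
    have hu : u ∈ ({w} : Set V) := by rw [← h']; exact hA.reachable
    rw [Set.mem_singleton_iff] at haw hu
    have hua : u = a := hu.trans haw.symm
    rw [hua] at hA
    exact G.loopless.irrefl a hA

theorem xy_ne {X Y : Set V} (hd : Disjoint X Y) {x y : V} (hx : x ∈ X) (hy : y ∈ Y) :
    x ≠ y := fun h => Set.disjoint_left.1 hd hx (h ▸ hy)

theorem comparable2 {G : SimpleGraph V} {X Y : Set V} (hd : Disjoint X Y)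
    (hu : X ∪ Y = Set.univ) (hX : ∀ u ∈ X, ∀ v ∈ X, ¬ G.Adj u v)
    (hY : ∀ u ∈ Y, ∀ v ∈ Y, ¬ G.Adj u v) (hP5 : ¬ HasInducedP5On G Set.univ)
    {a b c : V} (ha : a ∈ X) (hb : b ∈ X) (hca : G.Adj a c) (hcb : G.Adj b c) :
    G.neighborSet a ⊆ G.neighborSet b ∨ G.neighborSet b ⊆ G.neighborSet a := by
  by_cases hab : a = b
  · subst hab; left; exact subset_rfl
  by_contra hcon
  push_neg at hcon
  obtain ⟨hnab, hnba⟩ := hcon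
  obtain ⟨y, hya, hynb⟩ := Set.not_subset.1 hnab
  obtain ⟨y', hy'b, hy'na⟩ := Set.not_subset.1 hnba
  have hya' : G.Adj a y := (G.mem_neighborSet a y).1 hya
  have hy'b' : G.Adj b y' := (G.mem_neighborSet b y').1 hy'b
  have hcY : c ∈ Y := bp_side hu hX ha hca
  have hyY : y ∈ Y := bp_side hu hX ha hya'
  have hy'Y : y' ∈ Y := bp_side hu hX hb hy'b'
  exact hP5 ⟨y, a, c, b, y', trivial, trivial, trivial, trivial, trivial,
    (xy_ne hd ha hyY).symm,
    (fun h => hynb (by rw [h]; exact (G.mem_neighborSet b c).2 hcb)),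
    (xy_ne hd hb hyY).symm,
    (fun h => hynb (by rw [h]; exact hy'b)),
    xy_ne hd ha hcY, hab, xy_ne hd ha hy'Y,
    (xy_ne hd hb hcY).symm,
    (fun h => hy'na (by rw [← h]; exact (G.mem_neighborSet a c).2 hca)),
    xy_ne hd hb hy'Y,
    hya'.symm, hca, hcb.symm, hy'b',
    hY y hyY c hcY,
    (fun h => hynb h.symm),
    hY y hyY y' hy'Y,
    hX a ha b hb,
    (fun h => hy'na h),
    hY c hcY y' hy'Y⟩

theorem comparable3 {G : SimpleGraph V} {X Y : Set V} (hd : Disjoint X Y)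
    (hu : X ∪ Y = Set.univ) (hX : ∀ u ∈ X, ∀ v ∈ X, ¬ G.Adj u v)
    (hY : ∀ u ∈ Y, ∀ v ∈ Y, ¬ G.Adj u v) (hP5 : ¬ HasInducedP5On G Set.univ)
    {a b c : V} (ha : a ∈ X) (hb : b ∈ X) (hc : c ∈ X)
    (h1 : G.neighborSet a ⊆ G.neighborSet c) (h2 : G.neighborSet b ⊆ G.neighborSet c) :
    G.neighborSet a ⊆ G.neighborSet b ∨ G.neighborSet b ⊆ G.neighborSet a := by
  by_cases hab : a = b
  · subst hab; left; exact subset_rfl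
  by_cases hac : a = c
  · right; exact hac ▸ h2
  by_cases hbc : b = c
  · left; exact hbc ▸ h1
  by_contra hcon
  push_neg at hcon
  obtain ⟨hnab, hnba⟩ := hcon
  obtain ⟨y, hya, hynb⟩ := Set.not_subset.1 hnab
  obtain ⟨y', hy'b, hy'na⟩ := Set.not_subset.1 hnba
  have hya' : G.Adj a y := (G.mem_neighborSet a y).1 hya
  have hy'b' : G.Adj b y' := (G.mem_neighborSet b y').1 hy'b
  have hyc : G.Adj c y := (G.mem_neighborSet c y).1 (h1 hya)
  have hy'c : G.Adj c y' := (G.mem_neighborSet c y').1 (h2 hy'b)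
  have hyY : y ∈ Y := bp_side hu hX ha hya'
  have hy'Y : y' ∈ Y := bp_side hu hX hb hy'b'
  exact hP5 ⟨a, y, c, y', b, trivial, trivial, trivial, trivial, trivial,
    xy_ne hd ha hyY, hac, xy_ne hd ha hy'Y, hab,
    (xy_ne hd hc hyY).symm,
    (fun h => hynb (by rw [h]; exact hy'b)),
    (xy_ne hd hb hyY).symm,
    xy_ne hd hc hy'Y, fun h => hbc h.symm, (xy_ne hd hb hy'Y).symm,
    hya', hyc.symm, hy'c, hy'b'.symm,
    hX a ha c hc,
    (fun h => hy'na h),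
    hX a ha b hb,
    hY y hyY y' hy'Y,
    (fun h => hynb h.symm),
    hX c hc b hb⟩

theorem comparable {G : SimpleGraph V} {X Y : Set V} (hd : Disjoint X Y)
    (hu : X ∪ Y = Set.univ) (hX : ∀ u ∈ X, ∀ v ∈ X, ¬ G.Adj u v)
    (hY : ∀ u ∈ Y, ∀ v ∈ Y, ¬ G.Adj u v) (hP5 : ¬ HasInducedP5On G Set.univ)
    (hpr : GraphIsPrimeOn G Set.univ) (hcard : 4 ≤ (Set.univ : Set V).encard)
    {a b : V} (ha : a ∈ X) (hb : b ∈ X) :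
    G.neighborSet a ⊆ G.neighborSet b ∨ G.neighborSet b ⊆ G.neighborSet a := by
  have hu' : Y ∪ X = Set.univ := (Set.union_comm Y X).trans hu
  have key : ∀ n : ℕ, ∀ a b : V, a ∈ X → b ∈ X → ∀ p : G.Walk a b, p.length ≤ n →
      G.neighborSet a ⊆ G.neighborSet b ∨ G.neighborSet b ⊆ G.neighborSet a := by
    intro n
    induction n using Nat.strong_induction_on with
    | _ n IH =>
      intro a b ha hb p hp
      cases p with
      | nil => left; exact subset_rfl
      | cons h q =>
        rename_i c
        have hcY : c ∈ Y := bp_side hu hX ha h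
        cases q with
        | nil => exact (Set.disjoint_left.1 hd hb hcY).elim
        | cons h2 q2 =>
          rename_i c2
          have hc2X : c2 ∈ X := bp_side hu' hY hcY h2
          have hlen : q2.length < n := by
            simp only [SimpleGraph.Walk.length_cons] at hp
            omega
          have hcomp2 := IH q2.length hlen c2 b hc2X hb q2 le_rfl
          have hcomp1 := comparable2 hd hu hX hY hP5 ha hc2X h h2.symm
          rcases hcomp1 with hac | hca
          · rcases hcomp2 with h3 | h3
            · left; exact hac.trans h3
            · exact comparable3 hd hu hX hY hP5 ha hb hc2X hac h3
          · rcases hcomp2 with h3 | h3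
            · exact comparable2 hd hu hX hY hP5 ha hb h
                ((G.mem_neighborSet b c).1 (h3 ((G.mem_neighborSet c2 c).2 h2.symm)))
            · right; exact h3.trans hca
  obtain ⟨p⟩ := gconnected hpr hcard a b
  exact key p.length a b ha hb p le_rfl

theorem nbr_nonempty {G : SimpleGraph V} (hpr : GraphIsPrimeOn G Set.univ)
    (hcard : 4 ≤ (Set.univ : Set V).encard) (w : V) : ∃ u, u ∈ G.neighborSet w := by
  by_contra hc
  push_neg at hc
  exact no_isolated hpr hcard (fun z hA => hc z hA)

theorem crit_cases {G : SimpleGraph V} {X Y : Set V} (hd : Disjoint X Y)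
    (hu : X ∪ Y = Set.univ) (hX : ∀ u ∈ X, ∀ v ∈ X, ¬ G.Adj u v)
    (hY : ∀ u ∈ Y, ∀ v ∈ Y, ¬ G.Adj u v) (hP5 : ¬ HasInducedP5On G Set.univ)
    (hpr : GraphIsPrimeOn G Set.univ) (hcard : 4 ≤ (Set.univ : Set V).encard)
    {v : V} (hv : v ∈ Y) (hnp : ¬ GraphIsPrimeOn G (Set.univ \ {v})) :
    (∃ x1 ∈ X, ∃ x2 ∈ X, x1 ≠ x2 ∧ v ∉ G.neighborSet x2 ∧
      G.neighborSet x1 = insert v (G.neighborSet x2)) ∨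
    (∃ x ∈ X, G.neighborSet x = {v}) := by
  have hu' : Y ∪ X = Set.univ := (Set.union_comm Y X).trans hu
  have hside : ∀ u : V, u ∈ X ∨ u ∈ Y := fun u => (hu ▸ Set.mem_univ u : u ∈ X ∪ Y)
  have h3 : 3 ≤ (Set.univ \ {v} : Set V).encard := by
    rw [Set.encard_diff_singleton_of_mem (Set.mem_univ v)]
    exact ENat.le_sub_of_add_le_left (by norm_num) (by norm_num at hcard ⊢; exact hcard)
  have hex : ∃ M, GraphIsModuleOn G (Set.univ \ {v}) M ∧
      ¬(M = ∅ ∨ M = Set.univ \ {v} ∨ ∃ w, M = {w}) := by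
    by_contra hc
    push_neg at hc
    exact hnp ⟨h3, fun M hM => by
      have := hc M hM
      tauto⟩
  obtain ⟨M, hMmod, hMn⟩ := hex
  push_neg at hMn
  obtain ⟨hne, hnW, hnsing⟩ := hMn
  have hMsub : M ⊆ Set.univ \ {v} := hMmod.1
  obtain ⟨a, ha⟩ := hne
  obtain ⟨b, hb, hba⟩ : ∃ b ∈ M, b ≠ a := by
    by_contra hc
    push_neg at hc
    exact hnsing a (Set.eq_singleton_iff_unique_mem.2 ⟨ha, hc⟩)
  by_cases hMX : ∃ u ∈ M, u ∈ X <;> by_cases hMY : ∃ u ∈ M, u ∈ Y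
  · -- mixed case
    obtain ⟨x, hxM, hxX⟩ := hMX
    obtain ⟨y0, hy0M, hy0Y⟩ := hMY
    have hcross : ∀ m ∈ M, ∀ w, w ∈ Set.univ \ {v} → w ∉ M → ¬ G.Adj w m := by
      intro m hm w hw hwM hadj
      rcases hMmod.2 w ⟨hw, hwM⟩ with hall | hnone
      · rcases hside w with hwX | hwY
        · exact hX w hwX x hxX (hall x hxM)
        · exact hY w hwY y0 hy0Y (hall y0 hy0M)
      · exact hnone m hm hadj
    obtain ⟨w, hwW, hwM⟩ : ∃ w ∈ Set.univ \ {v}, w ∉ M := by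
      by_contra hc
      push_neg at hc
      exact hnW (Set.Subset.antisymm hMsub hc)
    rcases hside w with hwX | hwY
    · -- w ∈ X
      have hNx : ∀ u ∈ G.neighborSet x, u ∈ M ∨ u = v := by
        intro u hu
        by_contra hc
        push_neg at hc
        exact hcross x hxM u ⟨Set.mem_univ u, hc.2⟩ hc.1
          ((G.mem_neighborSet x u).1 hu).symm
      have hNw : ∀ u ∈ G.neighborSet w, u ∉ M := by
        intro u hu huM
        exact hcross u huM w hwW hwM ((G.mem_neighborSet w u).1 hu)
      rcases comparable hd hu hX hY hP5 hpr hcard hwX hxX with hwx | hxw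
      · right
        refine ⟨w, hwX, ?_⟩
        have hsub : G.neighborSet w ⊆ {v} := by
          intro u hu
          rcases hNx u (hwx hu) with hM' | h'
          · exact absurd hM' (hNw u hu)
          · exact h'
        obtain ⟨u0, hu0⟩ := nbr_nonempty hpr hcard w
        have : u0 = v := hsub hu0
        subst this
        exact Set.Subset.antisymm hsub (by intro z hz; rw [Set.mem_singleton_iff] at hz; rw [hz]; exact hu0)
      · right
        refine ⟨x, hxX, ?_⟩
        have hsub : G.neighborSet x ⊆ {v} := by
          intro u hu
          rcases hNx u hu with hM' | h'
          · exact absurd hM' (hNw u (hxw hu))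
          · exact h'
        obtain ⟨u0, hu0⟩ := nbr_nonempty hpr hcard x
        have : u0 = v := hsub hu0
        subst this
        exact Set.Subset.antisymm hsub (by intro z hz; rw [Set.mem_singleton_iff] at hz; rw [hz]; exact hu0)
    · -- w ∈ Y
      exfalso
      have hNy0 : ∀ u ∈ G.neighborSet y0, u ∈ M := by
        intro u hu
        have huX : u ∈ X := bp_side hu' hY hy0Y ((G.mem_neighborSet y0 u).1 hu)
        by_contra hc
        exact hcross y0 hy0M u ⟨Set.mem_univ u, xy_ne hd huX hv⟩ hc
          ((G.mem_neighborSet y0 u).1 hu).symm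
      have hNw : ∀ u ∈ G.neighborSet w, u ∉ M := by
        intro u hu huM
        exact hcross u huM w hwW hwM ((G.mem_neighborSet w u).1 hu)
      rcases comparable hd.symm hu' hY hX hP5 hpr hcard hwY hy0Y with h1 | h1
      · obtain ⟨u0, hu0⟩ := nbr_nonempty hpr hcard w
        exact hNw u0 hu0 (hNy0 u0 (h1 hu0))
      · obtain ⟨u0, hu0⟩ := nbr_nonempty hpr hcard y0
        exact hNw u0 (h1 hu0) (hNy0 u0 hu0)
  · -- M ⊆ X
    have hMsubX : ∀ u ∈ M, u ∈ X := fun u hu =>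
      (hside u).resolve_right (fun h => hMY ⟨u, hu, h⟩)
    have haX := hMsubX a ha
    have hbX := hMsubX b hb
    have hiff : ∀ u, u ∈ Y → u ≠ v → (G.Adj u a ↔ G.Adj u b) := by
      intro u huY huv
      have huM : u ∉ M := fun h => Set.disjoint_left.1 hd (hMsubX u h) huY
      rcases hMmod.2 u ⟨⟨Set.mem_univ u, huv⟩, huM⟩ with hall | hnone
      · exact ⟨fun _ => hall b hb, fun _ => hall a ha⟩
      · exact ⟨fun h => absurd h (hnone a ha), fun h => absurd h (hnone b hb)⟩
    have hsubab : ∀ u, u ∈ G.neighborSet a → u ≠ v → u ∈ G.neighborSet b := by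
      intro u hu1 huv
      have huY : u ∈ Y := bp_side hu hX haX ((G.mem_neighborSet a u).1 hu1)
      exact ((hiff u huY huv).1 ((G.mem_neighborSet a u).1 hu1).symm).symm
    have hsubba : ∀ u, u ∈ G.neighborSet b → u ≠ v → u ∈ G.neighborSet a := by
      intro u hu1 huv
      have huY : u ∈ Y := bp_side hu hX hbX ((G.mem_neighborSet b u).1 hu1)
      exact ((hiff u huY huv).2 ((G.mem_neighborSet b u).1 hu1).symm).symm
    have hnetw : G.neighborSet a ≠ G.neighborSet b :=
      fun h => no_twins hpr hcard (Ne.symm hba) h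
    by_cases hva : v ∈ G.neighborSet a <;> by_cases hvb : v ∈ G.neighborSet b
    · exfalso
      refine hnetw (Set.ext fun u => ⟨fun h => ?_, fun h => ?_⟩)
      · by_cases huv : u = v
        · rw [huv]; exact hvb
        · exact hsubab u h huv
      · by_cases huv : u = v
        · rw [huv]; exact hva
        · exact hsubba u h huv
    · left
      refine ⟨a, haX, b, hbX, Ne.symm hba, hvb, ?_⟩
      refine Set.ext fun u => ⟨fun h => ?_, fun h => ?_⟩
      · by_cases huv : u = v
        · rw [huv]; exact Set.mem_insert v _
        · exact Set.mem_insert_of_mem v (hsubab u h huv)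
      · rcases h with h | h
        · rw [h]; exact hva
        · exact hsubba u h (fun hh => hvb (hh ▸ h))
    · left
      refine ⟨b, hbX, a, haX, hba, hva, ?_⟩
      refine Set.ext fun u => ⟨fun h => ?_, fun h => ?_⟩
      · by_cases huv : u = v
        · rw [huv]; exact Set.mem_insert v _
        · exact Set.mem_insert_of_mem v (hsubba u h huv)
      · rcases h with h | h
        · rw [h]; exact hvb
        · exact hsubab u h (fun hh => hva (hh ▸ h))
    · exfalso
      refine hnetw (Set.ext fun u => ⟨fun h => ?_, fun h => ?_⟩)
      · exact hsubab u h (fun hh => hva (hh ▸ h))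
      · exact hsubba u h (fun hh => hvb (hh ▸ h))
  · -- M ⊆ Y
    exfalso
    have hMsubY : ∀ u ∈ M, u ∈ Y := fun u hu =>
      (hside u).resolve_left (fun h => hMX ⟨u, hu, h⟩)
    have haY := hMsubY a ha
    have hbY := hMsubY b hb
    have heq : G.neighborSet a = G.neighborSet b := by
      refine Set.ext fun u => ⟨fun h => ?_, fun h => ?_⟩
      · have huX : u ∈ X := bp_side hu' hY haY ((G.mem_neighborSet a u).1 h)
        have huM : u ∉ M := fun hh => Set.disjoint_left.1 hd huX (hMsubY u hh)
        rcases hMmod.2 u ⟨⟨Set.mem_univ u, xy_ne hd huX hv⟩, huM⟩ with hall | hnone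
        · exact (hall b hb).symm
        · exact absurd ((G.mem_neighborSet a u).1 h).symm (hnone a ha)
      · have huX : u ∈ X := bp_side hu' hY hbY ((G.mem_neighborSet b u).1 h)
        have huM : u ∉ M := fun hh => Set.disjoint_left.1 hd huX (hMsubY u hh)
        rcases hMmod.2 u ⟨⟨Set.mem_univ u, xy_ne hd huX hv⟩, huM⟩ with hall | hnone
        · exact (hall a ha).symm
        · exact absurd ((G.mem_neighborSet b u).1 h).symm (hnone b hb)
    exact no_twins hpr hcard (Ne.symm hba) heq
  · exfalso
    rcases hside a with h | h
    · exact hMX ⟨a, ha, h⟩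
    · exact hMY ⟨a, ha, h⟩

theorem mem_nbr_symm {G : SimpleGraph V} {u w : V} (h : u ∈ G.neighborSet w) :
    w ∈ G.neighborSet u := ((G.mem_neighborSet w u).1 h).symm

theorem maxExists {G : SimpleGraph V} {X Y : Set V} (hd : Disjoint X Y)
    (hu : X ∪ Y = Set.univ) (hX : ∀ u ∈ X, ∀ v ∈ X, ¬ G.Adj u v)
    (hY : ∀ u ∈ Y, ∀ v ∈ Y, ¬ G.Adj u v) (hP5 : ¬ HasInducedP5On G Set.univ)
    (hpr : GraphIsPrimeOn G Set.univ) (hcard : 4 ≤ (Set.univ : Set V).encard)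
    {v : V} (hv : v ∈ Y) (hnp : ¬ GraphIsPrimeOn G (Set.univ \ {v})) :
    ∃ m ∈ X, m ∈ G.neighborSet v ∧
      ∀ z ∈ G.neighborSet v, G.neighborSet m ⊆ G.neighborSet z := by
  have hu' : Y ∪ X = Set.univ := (Set.union_comm Y X).trans hu
  rcases crit_cases hd hu hX hY hP5 hpr hcard hv hnp with
    ⟨x1, hx1, x2, hx2, hne12, hvnx2, heq⟩ | ⟨x, hx, heq⟩
  · refine ⟨x1, hx1, mem_nbr_symm (by rw [heq]; exact Set.mem_insert v _), ?_⟩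
    intro z hz
    have hzX : z ∈ X := bp_side hu' hY hv ((G.mem_neighborSet v z).1 hz)
    rcases comparable hd hu hX hY hP5 hpr hcard hzX hx1 with h1 | h1
    · rcases comparable hd hu hX hY hP5 hpr hcard hzX hx2 with h2 | h2
      · exact absurd (h2 (mem_nbr_symm hz)) hvnx2
      · rw [heq]
        intro u hu1
        rcases hu1 with h' | h'
        · rw [h']; exact mem_nbr_symm hz
        · exact h2 h'
    · exact h1
  · refine ⟨x, hx, mem_nbr_symm (by rw [heq]; rfl), ?_⟩
    intro z hz
    rw [heq]
    intro u hu1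
    rw [Set.mem_singleton_iff] at hu1
    rw [hu1]
    exact mem_nbr_symm hz

theorem keyNbhd {G : SimpleGraph V} {X Y : Set V} (hd : Disjoint X Y)
    (hu : X ∪ Y = Set.univ) (hX : ∀ u ∈ X, ∀ v ∈ X, ¬ G.Adj u v)
    (hY : ∀ u ∈ Y, ∀ v ∈ Y, ¬ G.Adj u v)
    {x m : V} (hx : x ∈ X) (hmem : m ∈ G.neighborSet x)
    (hmin : ∀ z ∈ G.neighborSet x, G.neighborSet m ⊆ G.neighborSet z) (z : V) :
    G.Adj z m ↔ (z ∈ X ∧ G.neighborSet x ⊆ G.neighborSet z) := by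
  have hu' : Y ∪ X = Set.univ := (Set.union_comm Y X).trans hu
  have hmY : m ∈ Y := bp_side hu hX hx ((G.mem_neighborSet x m).1 hmem)
  constructor
  · intro hA
    have hzX : z ∈ X := bp_side hu' hY hmY hA.symm
    refine ⟨hzX, ?_⟩
    by_contra hc
    obtain ⟨y0, hy0, hy0z⟩ := Set.not_subset.1 hc
    have : z ∈ G.neighborSet y0 := hmin y0 hy0 ((G.mem_neighborSet m z).2 hA.symm)
    exact hy0z (mem_nbr_symm this)
  · rintro ⟨hzX, hsub⟩
    exact ((G.mem_neighborSet z m).1 (hsub hmem))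

theorem ychar {G : SimpleGraph V} {X Y : Set V} (hd : Disjoint X Y)
    (hu : X ∪ Y = Set.univ) (hX : ∀ u ∈ X, ∀ v ∈ X, ¬ G.Adj u v)
    (hY : ∀ u ∈ Y, ∀ v ∈ Y, ¬ G.Adj u v)
    {y m : V} (hy : y ∈ Y) (hmem : m ∈ G.neighborSet y)
    (hmax : ∀ z ∈ G.neighborSet y, G.neighborSet m ⊆ G.neighborSet z) :
    G.neighborSet y = {z | z ∈ X ∧ G.neighborSet m ⊆ G.neighborSet z} := by
  have hu' : Y ∪ X = Set.univ := (Set.union_comm Y X).trans hu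
  ext z
  constructor
  · intro hz
    exact ⟨bp_side hu' hY hy ((G.mem_neighborSet y z).1 hz), hmax z hz⟩
  · rintro ⟨hzX, hsub⟩
    exact mem_nbr_symm (hsub (mem_nbr_symm hmem))

theorem bwd_main {G : SimpleGraph V} {X Y : Set V} (hd : Disjoint X Y)
    (hu : X ∪ Y = Set.univ) (hX : ∀ u ∈ X, ∀ v ∈ X, ¬ G.Adj u v)
    (hY : ∀ u ∈ Y, ∀ v ∈ Y, ¬ G.Adj u v) (hP5 : ¬ HasInducedP5On G Set.univ)
    (hcrit : GraphIsCriticalOn G Set.univ) (hcard : 4 ≤ (Set.univ : Set V).encard) :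
    IsDiscreteHalfGraph G := by
  classical
  obtain ⟨hpr, hcr⟩ := hcrit
  have hu' : Y ∪ X = Set.univ := (Set.union_comm Y X).trans hu
  have hside : ∀ u : V, u ∈ X ∨ u ∈ Y := fun u => (hu ▸ Set.mem_univ u : u ∈ X ∪ Y)
  have hminφ : ∀ x : V, ∃ m, x ∈ X → (m ∈ Y ∧ m ∈ G.neighborSet x ∧
      ∀ z ∈ G.neighborSet x, G.neighborSet m ⊆ G.neighborSet z) := by
    intro x
    by_cases hx : x ∈ X
    · obtain ⟨m, hmY, hmem, hmin⟩ :=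
        maxExists hd.symm hu' hY hX hP5 hpr hcard hx (hcr x (Set.mem_univ x))
      exact ⟨m, fun _ => ⟨hmY, hmem, hmin⟩⟩
    · exact ⟨x, fun h => absurd h hx⟩
  choose φ hφ using hminφ
  have hNφ : ∀ x ∈ X, G.neighborSet (φ x) =
      {z | z ∈ X ∧ G.neighborSet x ⊆ G.neighborSet z} := by
    intro x hx
    obtain ⟨hmY, hmem, hmin⟩ := hφ x hx
    ext z
    rw [G.mem_neighborSet]
    constructor
    · intro h; exact (keyNbhd hd hu hX hY hx hmem hmin z).1 h.symm
    · intro h; exact ((keyNbhd hd hu hX hY hx hmem hmin z).2 h).symm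
  have hne_twins : ∀ p q : V, G.neighborSet p = G.neighborSet q → p = q := by
    intro p q h
    by_contra hne
    exact no_twins hpr hcard hne h
  have hsurj : ∀ y ∈ Y, ∃ m ∈ X, φ m = y ∧ m ∈ G.neighborSet y ∧
      ∀ z ∈ G.neighborSet y, G.neighborSet m ⊆ G.neighborSet z := by
    intro y hy
    obtain ⟨m, hmX, hmem, hmax⟩ := maxExists hd hu hX hY hP5 hpr hcard hy (hcr y (Set.mem_univ y))
    have h1 : G.neighborSet y = G.neighborSet (φ m) := by
      rw [ychar hd hu hX hY hy hmem hmax, hNφ m hmX]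
    exact ⟨m, hmX, (hne_twins _ _ h1).symm, hmem, hmax⟩
  refine ⟨X, Y, fun p q => p ∈ X ∧ q ∈ X ∧ G.neighborSet q ⊆ G.neighborSet p, φ,
    ⟨hd, hu, ⟨fun x hx => ⟨hx, hx, subset_rfl⟩, ?_, ?_, ?_⟩,
      ⟨fun x hx => (hφ x hx).1, ?_, ?_⟩, ?_⟩, ?_, ?_⟩
  · -- antisymm
    intro x _ y _ h1 h2
    exact hne_twins x y (Set.Subset.antisymm h2.2.2 h1.2.2)
  · -- trans
    intro x hx y _ z hz h1 h2
    exact ⟨hx, hz, h2.2.2.trans h1.2.2⟩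
  · -- total
    intro x hx y hy
    rcases comparable hd hu hX hY hP5 hpr hcard hx hy with h | h
    · right; exact ⟨hy, hx, h⟩
    · left; exact ⟨hx, hy, h⟩
  · -- InjOn
    intro p hp q hq heq
    have h1 : {z | z ∈ X ∧ G.neighborSet p ⊆ G.neighborSet z} =
        {z | z ∈ X ∧ G.neighborSet q ⊆ G.neighborSet z} := by
      rw [← hNφ p hp, ← hNφ q hq, heq]
    have hpq : G.neighborSet q ⊆ G.neighborSet p := by
      have hmem : p ∈ {z | z ∈ X ∧ G.neighborSet p ⊆ G.neighborSet z} := ⟨hp, subset_rfl⟩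
      rw [h1] at hmem
      exact hmem.2
    have hqp : G.neighborSet p ⊆ G.neighborSet q := by
      have hmem : q ∈ {z | z ∈ X ∧ G.neighborSet q ⊆ G.neighborSet z} := ⟨hq, subset_rfl⟩
      rw [← h1] at hmem
      exact hmem.2
    exact hne_twins p q (Set.Subset.antisymm hqp hpq)
  · -- SurjOn
    intro y hy
    obtain ⟨m, hmX, hfm, -⟩ := hsurj y hy
    exact ⟨m, hmX, hfm⟩
  · -- adjacency
    intro u v
    constructor
    · intro hA
      rcases hside u with huX | huY
      · have hvY : v ∈ Y := bp_side hu hX huX hA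
        obtain ⟨m, hmX, hfm, hmem, hmax⟩ := hsurj v hvY
        exact ⟨u, huX, m, hmX, ⟨huX, hmX, hmax u ((G.mem_neighborSet v u).2 hA.symm)⟩,
          Or.inl ⟨rfl, hfm.symm⟩⟩
      · have hvX : v ∈ X := bp_side hu' hY huY hA
        obtain ⟨m, hmX, hfm, hmem, hmax⟩ := hsurj u huY
        exact ⟨v, hvX, m, hmX, ⟨hvX, hmX, hmax v ((G.mem_neighborSet u v).2 hA)⟩,
          Or.inr ⟨rfl, hfm.symm⟩⟩
    · rintro ⟨p, hp, q, hq, hrpq, ⟨rfl, rfl⟩ | ⟨rfl, rfl⟩⟩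
      · have hmem : u ∈ G.neighborSet (φ q) := by
          rw [hNφ q hq]; exact ⟨hp, hrpq.2.2⟩
        exact ((G.mem_neighborSet (φ q) u).1 hmem).symm
      · have hmem : v ∈ G.neighborSet (φ q) := by
          rw [hNφ q hq]; exact ⟨hp, hrpq.2.2⟩
        exact (G.mem_neighborSet (φ q) v).1 hmem
  · -- predecessors
    intro x hx hnmin
    rcases crit_cases hd.symm hu' hY hX hP5 hpr hcard hx (hcr x (Set.mem_univ x)) with
      ⟨y1, hy1Y, y2, hy2Y, hne12, hxny2, heq⟩ | ⟨y, hyY, heq⟩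
    · obtain ⟨m2, hm2X, hm2mem, hm2max⟩ :=
        maxExists hd hu hX hY hP5 hpr hcard hy1Y (hcr y1 (Set.mem_univ y1))
      obtain ⟨m1, hm1X, hm1mem, hm1max⟩ :=
        maxExists hd hu hX hY hP5 hpr hcard hy2Y (hcr y2 (Set.mem_univ y2))
      have hm1y1 : m1 ∈ G.neighborSet y1 := by
        rw [heq]; exact Set.mem_insert_of_mem x hm1mem
      have hxm2 : x = m2 := by
        by_contra hne
        have hm2y2 : m2 ∈ G.neighborSet y2 := by
          have h' := hm2mem
          rw [heq] at h'
          rcases h' with h' | h'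
          · exact absurd h'.symm hne
          · exact h'
        have e1 : G.neighborSet m2 ⊆ G.neighborSet m1 := hm2max m1 hm1y1
        have e2 : G.neighborSet m1 ⊆ G.neighborSet m2 := hm1max m2 hm2y2
        have heq2 : G.neighborSet y1 = G.neighborSet y2 := by
          rw [ychar hd hu hX hY hy1Y hm2mem hm2max, ychar hd hu hX hY hy2Y hm1mem hm1max,
            Set.Subset.antisymm e2 e1]
        have hx1 : x ∈ G.neighborSet y1 := by rw [heq]; exact Set.mem_insert x _
        rw [heq2] at hx1
        exact hxny2 hx1
      refine ⟨m1, hm1X, ?_, ?_, ?_⟩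
      · intro h; exact hxny2 (h ▸ hm1mem)
      · refine ⟨hm1X, hx, ?_⟩
        have h' := hm2max m1 hm1y1
        rw [← hxm2] at h'
        exact h'
      · intro z hz hrpz hrzx
        have hy1Nx : y1 ∈ G.neighborSet x :=
          mem_nbr_symm (by rw [heq]; exact Set.mem_insert x _)
        have hzy1 : z ∈ G.neighborSet y1 := mem_nbr_symm (hrzx.2.2 hy1Nx)
        rw [heq] at hzy1
        rcases hzy1 with h' | h'
        · right; exact h'
        · left; exact hne_twins z m1 (Set.Subset.antisymm hrpz.2.2 (hm1max z h'))
    · exfalso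
      apply hnmin
      intro z hz
      refine ⟨hx, hz, ?_⟩
      intro w hw
      have hwY : w ∈ Y := bp_side hu hX hz ((G.mem_neighborSet z w).1 hw)
      rcases comparable hd.symm hu' hY hX hP5 hpr hcard hwY hyY with h1 | h1
      · have h2 : z ∈ G.neighborSet y := h1 (mem_nbr_symm hw)
        rw [heq, Set.mem_singleton_iff] at h2
        rw [h2] at hw
        exact hw
      · have hxy : x ∈ G.neighborSet y := by rw [heq]; rfl
        exact mem_nbr_symm (h1 hxy)
  · -- successors
    intro x hx hnmax
    obtain ⟨hφY, hφmem, hφmin⟩ := hφ x hx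
    rcases crit_cases hd hu hX hY hP5 hpr hcard hφY (hcr (φ x) (Set.mem_univ _)) with
      ⟨x1, hx1X, x2, hx2X, hne12, hφnx2, heq⟩ | ⟨x', hx'X, heq⟩
    · have hx1max : ∀ z ∈ G.neighborSet (φ x), G.neighborSet x1 ⊆ G.neighborSet z := by
        intro z hz
        have hzX : z ∈ X := bp_side hu' hY hφY ((G.mem_neighborSet (φ x) z).1 hz)
        rcases comparable hd hu hX hY hP5 hpr hcard hzX hx1X with h1 | h1
        · rcases comparable hd hu hX hY hP5 hpr hcard hzX hx2X with h2 | h2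
          · exact absurd (h2 (mem_nbr_symm hz)) hφnx2
          · rw [heq]
            intro u hu1
            rcases hu1 with h' | h'
            · rw [h']; exact mem_nbr_symm hz
            · exact h2 h'
        · exact h1
      have hx1m : x1 ∈ G.neighborSet (φ x) :=
        mem_nbr_symm (by rw [heq]; exact Set.mem_insert _ _)
      have hxm : x ∈ G.neighborSet (φ x) := mem_nbr_symm hφmem
      have h1 : G.neighborSet x ⊆ G.neighborSet x1 := by
        have h' := hx1m
        rw [hNφ x hx] at h'
        exact h'.2
      have hx1x : x1 = x :=
        hne_twins x1 x (Set.Subset.antisymm (hx1max x hxm) h1)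
      refine ⟨x2, hx2X, ?_, ?_, ?_⟩
      · intro h; exact hne12 (hx1x.trans h.symm)
      · refine ⟨hx, hx2X, ?_⟩
        rw [← hx1x, heq]
        exact Set.subset_insert _ _
      · intro z hz hrxz hrzs
        by_cases hφz : φ x ∈ G.neighborSet z
        · left
          have hzm : z ∈ G.neighborSet (φ x) := mem_nbr_symm hφz
          rw [hNφ x hx] at hzm
          exact hne_twins z x (Set.Subset.antisymm hrxz.2.2 hzm.2)
        · right
          have hsub : G.neighborSet z ⊆ G.neighborSet x2 := by
            intro u hu1
            have h' := hrxz.2.2 hu1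
            rw [← hx1x, heq] at h'
            rcases h' with h' | h'
            · exact absurd (h' ▸ hu1) hφz
            · exact h'
          exact hne_twins z x2 (Set.Subset.antisymm hsub hrzs.2.2)
    · exfalso
      have hx'm : x' ∈ G.neighborSet (φ x) := mem_nbr_symm (by rw [heq]; rfl)
      rw [hNφ x hx] at hx'm
      have hNx : G.neighborSet x = {φ x} := by
        apply Set.Subset.antisymm
        · intro u hu1
          have h' := hx'm.2 hu1
          rw [heq] at h'
          exact h'
        · intro u hu1
          rw [Set.mem_singleton_iff] at hu1
          rw [hu1]
          exact hφmem
      apply hnmax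
      intro z hz
      refine ⟨hz, hx, ?_⟩
      rw [hNx]
      rcases comparable hd hu hX hY hP5 hpr hcard hz hx with h1 | h1
      · obtain ⟨u0, hu0⟩ := nbr_nonempty hpr hcard z
        have h2 : u0 = φ x := by
          have h3 := h1 hu0
          rw [hNx] at h3
          exact h3
        intro w hw
        rw [Set.mem_singleton_iff] at hw
        rw [hw, ← h2]
        exact hu0
      · intro w hw
        rw [Set.mem_singleton_iff] at hw
        rw [hw]
        exact h1 hφmem

end S8

/-- Theorem 1.26: a bipartite graph on at least 4 vertices is a discrete half
graph iff it is `P₅`-free and critical. -/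
theorem statement8 (G : SimpleGraph V) (hbip : IsBipartite G)
    (hcard : 4 ≤ (Set.univ : Set V).encard) :
    IsDiscreteHalfGraph G ↔
      (¬ HasInducedP5On G Set.univ ∧ GraphIsCriticalOn G Set.univ) := by
  constructor
  · rintro ⟨X, Y, r, φ, hH, hdisc⟩
    exact ⟨S8.hg_p5free hH, S8.hg_critical hH hdisc hcard⟩
  · rintro ⟨hP5, hcrit⟩
    obtain ⟨X, Y, hd, hu, hX, hY⟩ := hbip
    exact S8.bwd_main hd hu hX hY hP5 hcrit hcard
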